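/- Let G be a graph whose complement's edges pairwise share a common vertex v (i.e., every non-edge of G is incident to v) and which has at least one non-edge, and let k ≤ n − 2 where n = |V(G)|. Then B_{≥k}(G) is a clique on 1 + m vertices, where m is the number of non-edges of G. -/

import Mathlib

open Finset

variable {V : Type*} [Fintype V] [DecidableEq V]

def IsISP (G : SimpleGraph V) (P : Finpartition (univ : Finset V)) : Prop :=
  ∀ A ∈ P.parts, ∀ u ∈ A, ∀ v ∈ A, ¬ G.Adj u v

def samePart (P : Finpartition (univ : Finset V)) (u v : V) : Prop :=
  ∃ A ∈ P.parts, u ∈ A ∧ v ∈ A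

def MovedBy (P Q : Finpartition (univ : Finset V)) (x : V) : Prop :=
  P ≠ Q ∧ ∀ u v : V, u ≠ x → v ≠ x → (samePart P u v ↔ samePart Q u v)

def BellGraph (G : SimpleGraph V) :
    SimpleGraph {P : Finpartition (univ : Finset V) // IsISP G P} where
  Adj P Q := ∃ x, MovedBy P.1 Q.1 x
  symm := by
    constructor
    rintro P Q ⟨x, hne, h⟩
    exact ⟨x, Ne.symm hne, fun u v hu hv => (h u v hu hv).symm⟩
  loopless := by
    constructor
    rintro P ⟨x, hne, _⟩
    exact hne rfl

def UpperBell (G : SimpleGraph V) (k : ℕ) :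
    SimpleGraph {P : Finpartition (univ : Finset V) // IsISP G P ∧ k ≤ P.parts.card} where
  Adj P Q := ∃ x, MovedBy P.1 Q.1 x
  symm := by
    constructor
    rintro P Q ⟨x, hne, h⟩
    exact ⟨x, Ne.symm hne, fun u v hu hv => (h u v hu hv).symm⟩
  loopless := by
    constructor
    rintro P ⟨x, hne, _⟩
    exact hne rfl

def IsUniversal (G : SimpleGraph V) (v : V) : Prop :=
  ∀ w, w ≠ v → G.Adj v w

lemma samePart_iff' (P : Finpartition (univ : Finset V)) (a b : V) :
    samePart P a b ↔ b ∈ P.part a := by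
  constructor
  · rintro ⟨A, hA, ha, hb⟩
    rwa [P.part_eq_of_mem hA ha]
  · intro hb
    exact ⟨P.part a, P.part_mem.mpr (mem_univ a), P.mem_part (mem_univ a), hb⟩

lemma samePart_refl (P : Finpartition (univ : Finset V)) (a : V) : samePart P a a :=
  ⟨P.part a, P.part_mem.mpr (mem_univ a), P.mem_part (mem_univ a), P.mem_part (mem_univ a)⟩

lemma samePart_symm {P : Finpartition (univ : Finset V)} {a b : V}
    (h : samePart P a b) : samePart P b a := by
  obtain ⟨A, hA, ha, hb⟩ := h; exact ⟨A, hA, hb, ha⟩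

lemma samePart_notAdj {G : SimpleGraph V} {P : Finpartition (univ : Finset V)}
    (hP : IsISP G P) {a b : V} (h : samePart P a b) : ¬ G.Adj a b := by
  obtain ⟨A, hA, ha, hb⟩ := h
  exact hP A hA a ha b hb

lemma finpart_eq_of_samePart {P Q : Finpartition (univ : Finset V)}
    (h : ∀ a b, samePart P a b ↔ samePart Q a b) : P = Q := by
  have hpart : ∀ a : V, P.part a = Q.part a := by
    intro a
    ext b
    rw [← samePart_iff', ← samePart_iff', h]
  ext A
  constructor
  · intro hA
    obtain ⟨a, ha⟩ := P.nonempty_of_mem_parts hA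
    rw [← P.part_eq_of_mem hA ha, hpart]
    exact Q.part_mem.mpr (mem_univ a)
  · intro hA
    obtain ⟨a, ha⟩ := Q.nonempty_of_mem_parts hA
    rw [← Q.part_eq_of_mem hA ha, ← hpart]
    exact P.part_mem.mpr (mem_univ a)

lemma samePart_bot (a b : V) : samePart (⊥ : Finpartition (univ : Finset V)) a b ↔ a = b := by
  rw [samePart_iff']
  have : (⊥ : Finpartition (univ : Finset V)).part a = {a} := by
    apply Finpartition.part_eq_of_mem
    · rw [Finpartition.parts_bot, mem_map]
      exact ⟨a, mem_univ a, rfl⟩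
    · exact mem_singleton_self a
  rw [this, mem_singleton]
  exact eq_comm

def pairFun (c w : V) : V → V := fun x => if x = w then c else x

instance (c w : V) : DecidableRel (Setoid.ker (pairFun c w)).r := fun a b =>
  decidable_of_iff (pairFun c w a = pairFun c w b) Setoid.ker_def.symm

def pairPart (c w : V) : Finpartition (univ : Finset V) :=
  Finpartition.ofSetoid (Setoid.ker (pairFun c w))

lemma samePart_pairPart (c w a b : V) :
    samePart (pairPart c w) a b ↔ pairFun c w a = pairFun c w b := by
  rw [samePart_iff', pairPart, Finpartition.mem_part_ofSetoid_iff_rel]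
  exact Setoid.ker_def

lemma pairFun_eq_iff {c w u v : V} (hu : u ≠ c) (hv : v ≠ c) :
    pairFun c w u = pairFun c w v ↔ u = v := by
  unfold pairFun
  split_ifs with h1 h2 h2
  · exact iff_of_true rfl (h1.trans h2.symm)
  · exact iff_of_false (fun h => hv h.symm) (fun h => h2 (h ▸ h1))
  · exact iff_of_false (fun h => hu h) (fun h => h1 (h.symm ▸ h2))
  · exact Iff.rfl

lemma pairFun_eq_iff' {c w u v : V} (hu : u ≠ w) (hv : v ≠ w) :
    pairFun c w u = pairFun c w v ↔ u = v := by
  unfold pairFun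
  rw [if_neg hu, if_neg hv]

lemma samePart_pairPart_self {c w : V} (hwc : w ≠ c) : samePart (pairPart c w) c w := by
  rw [samePart_pairPart]
  unfold pairFun
  rw [if_neg (Ne.symm hwc), if_pos rfl]

lemma pairPart_ne_bot {c w : V} (hwc : w ≠ c) :
    pairPart c w ≠ (⊥ : Finpartition (univ : Finset V)) := by
  intro h
  have := h ▸ samePart_pairPart_self hwc
  rw [samePart_bot] at this
  exact hwc this.symm

lemma pairPart_inj {c w1 w2 : V} (h1 : w1 ≠ c) (h2 : w2 ≠ c)
    (h : pairPart c w1 = pairPart c w2) : w1 = w2 := by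
  have hs : samePart (pairPart c w2) c w1 := h ▸ samePart_pairPart_self h1
  rw [samePart_pairPart] at hs
  unfold pairFun at hs
  rw [if_neg (Ne.symm h2)] at hs
  by_cases hw : w1 = w2
  · exact hw
  · rw [if_neg hw] at hs
    exact absurd hs.symm h1

lemma isISP_bot (G : SimpleGraph V) : IsISP G (⊥ : Finpartition (univ : Finset V)) := by
  intro A hA u hu v hv
  rw [Finpartition.parts_bot, mem_map] at hA
  obtain ⟨a, _, rfl⟩ := hA
  simp only [Function.Embedding.coeFn_mk, mem_singleton] at hu hv
  subst hu; subst hv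
  exact G.loopless.irrefl _

lemma isISP_pairPart {G : SimpleGraph V} {c w : V} (hwc : w ≠ c) (hcw : ¬ G.Adj c w) :
    IsISP G (pairPart c w) := by
  intro A hA u hu v hv
  have h : samePart (pairPart c w) u v := ⟨A, hA, hu, hv⟩
  rw [samePart_pairPart] at h
  unfold pairFun at h
  by_cases huv : u = v
  · subst huv; exact G.loopless.irrefl u
  · by_cases hu' : u = w <;> by_cases hv' : v = w
    · exact absurd (hu'.trans hv'.symm) huv
    · rw [if_pos hu', if_neg hv'] at h
      subst hu'
      rw [← h]
      exact fun hadj => hcw hadj.symm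
    · rw [if_neg hu', if_pos hv'] at h
      subst hv'
      rw [h]
      exact hcw
    · rw [if_neg hu', if_neg hv'] at h
      exact absurd h huv

lemma isp_classify {G : SimpleGraph V} (c : V)
    (hc : ∀ a b : V, a ≠ b → ¬ G.Adj a b → (a = c ∨ b = c))
    {P : Finpartition (univ : Finset V)} (hP : IsISP G P) :
    (∀ a b, samePart P a b ↔ a = b) ∨
      ∃ w, w ≠ c ∧ ¬ G.Adj c w ∧ ∀ a b, samePart P a b ↔ pairFun c w a = pairFun c w b := by
  by_cases htriv : ∀ a b, samePart P a b → a = b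
  · left
    intro a b
    exact ⟨htriv a b, fun h => h ▸ samePart_refl P a⟩
  · right
    push_neg at htriv
    obtain ⟨x, y, hxy, hne⟩ := htriv
    have hnadj : ¬ G.Adj x y := samePart_notAdj hP hxy
    have hw : ∃ w, w ≠ c ∧ samePart P c w := by
      rcases hc x y hne hnadj with rfl | rfl
      · exact ⟨y, fun h => hne h.symm, hxy⟩
      · exact ⟨x, hne, samePart_symm hxy⟩
    obtain ⟨w, hwc, hcw⟩ := hw
    have hnadjcw : ¬ G.Adj c w := samePart_notAdj hP hcw
    refine ⟨w, hwc, hnadjcw, ?_⟩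
    have key : ∀ a, a ≠ c → samePart P c a → a = w := by
      intro a hac hca
      by_contra haw
      have haw' : samePart P a w := by
        obtain ⟨A, hA, hc1, ha1⟩ := hca
        obtain ⟨B, hB, hc2, hw2⟩ := hcw
        rw [P.eq_of_mem_parts hA hB hc1 hc2] at ha1
        exact ⟨B, hB, ha1, hw2⟩
      have := samePart_notAdj hP haw'
      rcases hc a w haw this with rfl | rfl
      · exact hac rfl
      · exact hwc rfl
    intro a b
    constructor
    · intro hab
      by_cases h : a = b
      · subst h; rfl
      · rcases hc a b h (samePart_notAdj hP hab) with rfl | rfl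
        · have hb' : b = w := key b (fun hb => h hb.symm) hab
          subst hb'
          simp [pairFun]
        · have ha' : a = w := key a h (samePart_symm hab)
          subst ha'
          simp [pairFun]
    · intro hab
      by_cases ha : a = w <;> by_cases hb : b = w
      · subst ha; subst hb; exact samePart_refl P _
      · subst ha
        simp [pairFun, hb] at hab
        rw [← hab]
        exact samePart_symm hcw
      · subst hb
        simp [pairFun, ha] at hab
        rw [hab]
        exact hcw
      · simp [pairFun, ha, hb] at hab
        rw [hab]
        exact samePart_refl P b

lemma isp_card_parts {G : SimpleGraph V} (c : V)
    (hc : ∀ a b : V, a ≠ b → ¬ G.Adj a b → (a = c ∨ b = c))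
    {P : Finpartition (univ : Finset V)} (hP : IsISP G P) :
    Fintype.card V - 1 ≤ P.parts.card := by
  classical
  set A0 := P.part c with hA0def
  have hA0mem : A0 ∈ P.parts := P.part_mem.mpr (mem_univ c)
  have hcA0 : c ∈ A0 := P.mem_part (mem_univ c)
  have hcard2 : A0.card ≤ 2 := by
    by_contra h
    push_neg at h
    obtain ⟨x, hx, y, hy, z, hz, hxy, hxz, hyz⟩ := Finset.two_lt_card.mp h
    have hadj : ∀ u ∈ A0, ∀ v ∈ A0, u ≠ v → u = c ∨ v = c := fun u hu v hv huv =>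
      hc u v huv (hP A0 hA0mem u hu v hv)
    by_cases hxc : x = c
    · rcases hadj y hy z hz hyz with rfl | rfl
      · exact hxy hxc
      · exact hxz hxc
    · rcases hadj x hx y hy hxy with rfl | rfl
      · exact hxc rfl
      · rcases hadj x hx z hz hxz with rfl | rfl
        · exact hxc rfl
        · exact hyz rfl
  have h1 : ∀ A ∈ P.parts.erase A0, A.card ≤ 1 := by
    intro A hA
    rw [Finset.card_le_one]
    intro x hx y hy
    by_contra hxy
    have hAmem := Finset.mem_of_mem_erase hA
    have hcA : c ∈ A := by
      rcases hc x y hxy (hP A hAmem x hx y hy) with rfl | rfl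
      · exact hx
      · exact hy
    exact (Finset.mem_erase.mp hA).1 (P.part_eq_of_mem hAmem hcA).symm
  have hsum := P.sum_card_parts
  rw [Finset.card_univ] at hsum
  have hsplit : A0.card + ∑ A ∈ P.parts.erase A0, A.card = ∑ A ∈ P.parts, A.card :=
    Finset.add_sum_erase _ _ hA0mem
  have hle : ∑ A ∈ P.parts.erase A0, A.card ≤ (P.parts.erase A0).card • 1 :=
    Finset.sum_le_card_nsmul _ _ _ h1
  rw [smul_eq_mul, mul_one, Finset.card_erase_of_mem hA0mem] at hle
  have hpos : 1 ≤ P.parts.card := Finset.card_pos.mpr ⟨A0, hA0mem⟩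
  omega

theorem stmt16 (G : SimpleGraph V) (k : ℕ)
    (hv : ∃ v : V, ∀ a b : V, a ≠ b → ¬ G.Adj a b → (a = v ∨ b = v))
    (hne : ∃ a b : V, a ≠ b ∧ ¬ G.Adj a b)
    (hk : k ≤ Fintype.card V - 2) :
    UpperBell G k = ⊤ ∧
    Nat.card {P : Finpartition (univ : Finset V) // IsISP G P ∧ k ≤ P.parts.card} =
      1 + Nat.card Gᶜ.edgeSet := by
  obtain ⟨c, hc⟩ := hv
  constructor
  · ext P Q
    rw [SimpleGraph.top_adj]
    show (∃ x, MovedBy P.1 Q.1 x) ↔ P ≠ Q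
    constructor
    · rintro ⟨x, hne', _⟩ rfl
      exact hne' rfl
    · intro hPQ
      have hP1Q1 : P.1 ≠ Q.1 := fun h => hPQ (Subtype.ext h)
      rcases isp_classify c hc P.2.1 with hPt | ⟨w, hw1, hw2, hPw⟩ <;>
        rcases isp_classify c hc Q.2.1 with hQt | ⟨w', hw1', hw2', hQw⟩
      · exact absurd (finpart_eq_of_samePart fun a b => (hPt a b).trans (hQt a b).symm) hP1Q1
      · refine ⟨w', hP1Q1, fun u v hu hv => ?_⟩
        rw [hPt u v, hQw u v]
        exact (pairFun_eq_iff' hu hv).symm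
      · refine ⟨w, hP1Q1, fun u v hu hv => ?_⟩
        rw [hPw u v, hQt u v]
        exact pairFun_eq_iff' hu hv
      · refine ⟨c, hP1Q1, fun u v hu hv => ?_⟩
        rw [hPw u v, hQw u v, pairFun_eq_iff hu hv, pairFun_eq_iff hu hv]
  · have hbotmem : IsISP G (⊥ : Finpartition (univ : Finset V)) ∧
        k ≤ (⊥ : Finpartition (univ : Finset V)).parts.card := by
      refine ⟨isISP_bot G, ?_⟩
      rw [Finpartition.card_bot, Finset.card_univ]
      omega
    have hpairmem : ∀ w : {w : V // w ≠ c ∧ ¬ G.Adj c w},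
        IsISP G (pairPart c w.1) ∧ k ≤ (pairPart c w.1).parts.card := by
      intro w
      have h1 := isISP_pairPart w.2.1 w.2.2
      refine ⟨h1, ?_⟩
      have := isp_card_parts c hc h1
      omega
    let g : Option {w : V // w ≠ c ∧ ¬ G.Adj c w} →
        {P : Finpartition (univ : Finset V) // IsISP G P ∧ k ≤ P.parts.card} :=
      fun o => o.elim ⟨⊥, hbotmem⟩ (fun w => ⟨pairPart c w.1, hpairmem w⟩)
    have hbij : Function.Bijective g := by
      constructor
      · rintro (_ | w1) (_ | w2) h
        · rfl
        · exact absurd (congrArg Subtype.val h).symm (pairPart_ne_bot w2.2.1)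
        · exact absurd (congrArg Subtype.val h) (pairPart_ne_bot w1.2.1)
        · have := pairPart_inj w1.2.1 w2.2.1 (congrArg Subtype.val h)
          exact congrArg some (Subtype.ext this)
      · rintro ⟨P, hisp, hk'⟩
        rcases isp_classify c hc hisp with hPt | ⟨w, hw1, hw2, hPw⟩
        · exact ⟨none, Subtype.ext (finpart_eq_of_samePart fun a b =>
            (samePart_bot a b).trans (hPt a b).symm)⟩
        · exact ⟨some ⟨w, hw1, hw2⟩, Subtype.ext (finpart_eq_of_samePart fun a b =>
            (samePart_pairPart c w a b).trans (hPw a b).symm)⟩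
    have h1 : Nat.card (Option {w : V // w ≠ c ∧ ¬ G.Adj c w}) =
        Nat.card {P : Finpartition (univ : Finset V) // IsISP G P ∧ k ≤ P.parts.card} :=
      Nat.card_eq_of_bijective g hbij
    rw [Finite.card_option] at h1
    have h2 : Nat.card {w : V // w ≠ c ∧ ¬ G.Adj c w} = Nat.card Gᶜ.edgeSet := by
      let f : {w : V // w ≠ c ∧ ¬ G.Adj c w} → Gᶜ.edgeSet := fun w => ⟨s(c, w.1), by
        rw [SimpleGraph.mem_edgeSet, SimpleGraph.compl_adj]
        exact ⟨Ne.symm w.2.1, w.2.2⟩⟩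
      apply Nat.card_eq_of_bijective f
      constructor
      · rintro w1 w2 h
        exact Subtype.ext (Sym2.congr_right.mp (congrArg Subtype.val h))
      · rintro ⟨e, he⟩
        induction e using Sym2.ind with
        | _ a b =>
          rw [SimpleGraph.mem_edgeSet, SimpleGraph.compl_adj] at he
          obtain ⟨hab, hnadj⟩ := he
          rcases hc a b hab hnadj with rfl | rfl
          · exact ⟨⟨b, fun h => hab h.symm, hnadj⟩, Subtype.ext rfl⟩
          · exact ⟨⟨a, hab, fun h => hnadj h.symm⟩, Subtype.ext Sym2.eq_swap⟩
    omega
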